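/- With the buffered codeword x = u ‖ 0^w ‖ 1 ‖ p, suppose δ ≤ w deletions occur, all within a single window of size at most w. Let λ = k + w − δ + 1 and let y be the received string. Then y_λ = 1 if and only if all deleted positions lie in the first k + w positions of x (i.e., to the left of the buffer's terminal 1); in that case the systematic bits may be affected, and otherwise (y_λ = 0) the first k bits of y equal u. -/

import Mathlib

def delFrom {α : Type*} (n : ℕ) (x : List α) (D : Finset ℕ) : List α :=
  ((x.zipIdx n).filter (fun q => q.2 ∉ D)).map Prod.fst

private example {α : Type*} (x : List α) (D : Finset ℕ) :
    (x.zipIdx.filter (fun q => q.2 ∉ D)).map Prod.fst = delFrom 0 x D := rfl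

lemma delFrom_nil {α : Type*} (n : ℕ) (D : Finset ℕ) : delFrom n ([] : List α) D = [] := rfl

lemma delFrom_cons {α : Type*} (n : ℕ) (a : α) (l : List α) (D : Finset ℕ) :
    delFrom n (a :: l) D =
      if n ∈ D then delFrom (n+1) l D else a :: delFrom (n+1) l D := by
  simp [delFrom, List.zipIdx_cons, List.filter_cons]
  split_ifs with h <;> simp [h]

lemma count_shift (n m : ℕ) (D : Finset ℕ) (hn : n ∈ D) (hnm : n < m) :
    ((Finset.Ico n m).filter (· ∉ D)).card = ((Finset.Ico (n+1) m).filter (· ∉ D)).card := by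
  rw [← Finset.insert_Ico_add_one_left_eq_Ico hnm]
  rw [Finset.filter_insert, if_neg (by simp [hn])]

lemma L1 {α : Type*} (x : List α) : ∀ (n m j : ℕ) (D : Finset ℕ), n ≤ m → m ∉ D →
    m - n < x.length → j = ((Finset.Ico n m).filter (· ∉ D)).card →
    (delFrom n x D)[j]? = x[(m - n)]? := by
  induction x with
  | nil => intro n m j D _ _ h _; simp at h
  | cons a l ih =>
    intro n m j D hnm hmD hlt hj
    rw [delFrom_cons]
    by_cases hn : n ∈ D
    · have hne : n < m := lt_of_le_of_ne hnm (by rintro rfl; exact hmD hn)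
      rw [if_pos hn]
      have h1 : m - n = (m - (n+1)) + 1 := by omega
      rw [h1, List.getElem?_cons_succ]
      exact ih (n+1) m j D (by omega) hmD (by simp at hlt; omega)
        (by rw [hj, count_shift n m D hn hne])
    · rw [if_neg hn]
      rcases eq_or_lt_of_le hnm with rfl | hlt'
      · have : j = 0 := by simp [hj]
        subst this; simp
      · have hins : insert n (Finset.Ico (n+1) m) = Finset.Ico n m := by
          exact Finset.insert_Ico_add_one_left_eq_Ico hlt'
        have hj' : j = ((Finset.Ico (n+1) m).filter (· ∉ D)).card + 1 := by
          rw [hj, ← hins, Finset.filter_insert, if_pos hn, Finset.card_insert_of_notMem]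
          simp
        rw [hj']
        have h1 : m - n = (m - (n+1)) + 1 := by omega
        rw [h1, List.getElem?_cons_succ, List.getElem?_cons_succ]
        exact ih (n+1) m _ D (by omega) hmD (by simp at hlt; omega) rfl

lemma L2 {α : Type*} (x : List α) : ∀ (n j : ℕ) (D : Finset ℕ) (v : α),
    (delFrom n x D)[j]? = some v →
    ∃ m, n ≤ m ∧ m ∉ D ∧ x[(m - n)]? = some v ∧
      j = ((Finset.Ico n m).filter (· ∉ D)).card := by
  induction x with
  | nil => intro n j D v h; simp [delFrom_nil] at h
  | cons a l ih =>
    intro n j D v h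
    rw [delFrom_cons] at h
    by_cases hn : n ∈ D
    · rw [if_pos hn] at h
      obtain ⟨m, hm1, hm2, hm3, hm4⟩ := ih (n+1) j D v h
      refine ⟨m, by omega, hm2, ?_, ?_⟩
      · have h1 : m - n = (m - (n+1)) + 1 := by omega
        rw [h1, List.getElem?_cons_succ]; exact hm3
      · rw [hm4, ← count_shift n m D hn (by omega)]
    · rw [if_neg hn] at h
      cases j with
      | zero =>
        simp at h
        exact ⟨n, le_refl n, hn, by simp [h], by simp⟩
      | succ j' =>
        rw [List.getElem?_cons_succ] at h
        obtain ⟨m, hm1, hm2, hm3, hm4⟩ := ih (n+1) j' D v h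
        refine ⟨m, by omega, hm2, ?_, ?_⟩
        · have h1 : m - n = (m - (n+1)) + 1 := by omega
          rw [h1, List.getElem?_cons_succ]; exact hm3
        · have hins : insert n (Finset.Ico (n+1) m) = Finset.Ico n m := by
            exact Finset.insert_Ico_add_one_left_eq_Ico (by omega)
          rw [← hins, Finset.filter_insert, if_pos hn, Finset.card_insert_of_notMem (by simp), hm4]

/-- Delete from a list the entries at the (0-based) positions in `D`. -/
def deleteIndices {α : Type*} (x : List α) (D : Finset ℕ) : List α :=
  (x.zipIdx.filter (fun q => q.2 ∉ D)).map Prod.fst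

/-- With the buffered codeword x = u ‖ 0^w ‖ 1 ‖ p and δ ≤ w deletions localized in
a single window of size w, the bit of the received string y at (1-based) position
λ = k+w−δ+1 (0-based index k+w−δ) equals 1 iff all deleted positions lie to the left
of the buffer's terminal 1; and if that bit is 0 then the first k bits of y equal u. -/
theorem stmt12 (k w r : ℕ) (u p : List Bool) (hu : u.length = k) (hp : p.length = r)
    (D : Finset ℕ) (a : ℕ) (hwin : D ⊆ Finset.Ico a (a + w))
    (hδ : D.card ≤ w) (hrange : ∀ i ∈ D, i < k + w + 1 + r) :
    let x : List Bool := u ++ List.replicate w false ++ [true] ++ p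
    let δ := D.card
    let y := deleteIndices x D
    (y.getD (k + w - δ) false = true ↔ ∀ i ∈ D, i < k + w) ∧
      (y.getD (k + w - δ) false = false → y.take k = u) := by
  intro x δ y
  have hyd : y = delFrom 0 x D := rfl
  have hxlen : x.length = k + w + 1 + r := by simp [x, hu, hp]; omega
  have hgetD : ∀ n, y.getD n false = (y[n]?).getD false := by
    intro n; simp [List.getD_eq_getElem?_getD]
  -- value lemmas for x
  have xval1 : ∀ m, k ≤ m → m < k + w → x[m]? = some false := by
    intro m h1 h2
    show ((u ++ List.replicate w false ++ [true]) ++ p)[m]? = some false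
    rw [List.getElem?_append_left (by simp [hu]; omega),
        List.getElem?_append_left (by simp [hu]; omega),
        List.getElem?_append_right (by simp [hu]; omega)]
    rw [List.getElem?_replicate]
    simp [hu]
    omega
  have xval2 : x[(k + w)]? = some true := by
    show ((u ++ List.replicate w false ++ [true]) ++ p)[(k + w)]? = some true
    rw [List.getElem?_append_left (by simp [hu]),
        List.getElem?_append_right (by simp [hu])]
    simp [hu]
  have xval3 : ∀ i, i < k → x[i]? = u[i]? := by
    intro i hi
    show ((u ++ List.replicate w false ++ [true]) ++ p)[i]? = u[i]?
    rw [List.getElem?_append_left (by simp [hu]; omega),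
        List.getElem?_append_left (by simp [hu]; omega),
        List.getElem?_append_left (by simp [hu]; omega)]
  -- Case A
  have hA : (∀ i ∈ D, i < k + w) → y[(k + w - δ)]? = some true := by
    intro hall
    have hsub : D ⊆ Finset.Ico 0 (k + w) := by
      intro i hi; simp [Finset.mem_Ico]; exact hall i hi
    have hcount : k + w - δ = ((Finset.Ico 0 (k + w)).filter (· ∉ D)).card := by
      rw [← Finset.sdiff_eq_filter, Finset.card_sdiff_of_subset hsub]
      simp [δ]
    have := L1 x 0 (k + w) (k + w - δ) D (Nat.zero_le _)
      (fun h => absurd (hall _ h) (lt_irrefl _)) (by omega) hcount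
    rw [hyd, this]
    simpa using xval2
  -- Case B
  have hB : (∃ i ∈ D, k + w ≤ i) → y.getD (k + w - δ) false = false := by
    rintro ⟨d₀, hd₀, hd₀'⟩
    rw [hgetD]
    cases h : y[(k + w - δ)]? with
    | none => rfl
    | some v =>
      rw [hyd] at h
      obtain ⟨m, _, hm2, hm3, hm4⟩ := L2 x 0 (k + w - δ) D v h
      rw [Nat.sub_zero] at hm3
      have hsplit := Finset.card_filter_add_card_filter_not
        (s := Finset.Ico 0 m) (p := fun z => z ∉ D)
      have hfsub : (Finset.Ico 0 m).filter (fun z => ¬ z ∉ D) ⊆ D := by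
        intro z hz; simp at hz; exact hz.2
      have hc1 : ((Finset.Ico 0 m).filter (fun z => ¬ z ∉ D)).card ≤ δ :=
        Finset.card_le_card hfsub
      have hδw : δ ≤ w := hδ
      have hcard : ((Finset.Ico 0 m).filter (· ∉ D)).card
          + ((Finset.Ico 0 m).filter (fun z => ¬ z ∉ D)).card = m := by
        simpa using hsplit
      have hmle : m ≤ k + w := by omega
      have hmne : m ≠ k + w := by
        intro hme
        have : ((Finset.Ico 0 m).filter (fun z => ¬ z ∉ D)).card = δ := by omega
        have heq : (Finset.Ico 0 m).filter (fun z => ¬ z ∉ D) = D :=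
          Finset.eq_of_subset_of_card_le hfsub (le_of_eq this.symm)
        have : d₀ ∈ (Finset.Ico 0 m).filter (fun z => ¬ z ∉ D) := by rw [heq]; exact hd₀
        simp [Finset.mem_Ico] at this
        omega
      have hjm : k + w - δ ≤ m := by
        calc k + w - δ = ((Finset.Ico 0 m).filter (· ∉ D)).card := hm4
          _ ≤ (Finset.Ico 0 m).card := Finset.card_filter_le _ _
          _ = m := by simp
      have hkm : k ≤ m := by omega
      have : x[m]? = some false := xval1 m hkm (by omega)
      rw [hm3] at this
      simp at this
      simp [this]
  constructor
  · constructor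
    · intro htrue
      by_contra hc
      push_neg at hc
      rw [hB hc] at htrue
      exact Bool.false_ne_true htrue
    · intro hall
      rw [hgetD, hA hall]
      rfl
  · intro hfalse
    have hex : ∃ i ∈ D, k + w ≤ i := by
      by_contra hc
      push_neg at hc
      rw [hgetD, hA hc] at hfalse
      simp at hfalse
    obtain ⟨d₀, hd₀, hd₀'⟩ := hex
    have ha : k < a := by
      have := hwin hd₀
      simp [Finset.mem_Ico] at this
      omega
    have hDk : ∀ i ∈ D, k ≤ i := by
      intro i hi
      have := hwin hi
      simp [Finset.mem_Ico] at this
      omega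
    have hyi : ∀ i, i < k → y[i]? = u[i]? := by
      intro i hi
      have hiD : i ∉ D := fun h => by have := hDk i h; omega
      have hcount : i = ((Finset.Ico 0 i).filter (· ∉ D)).card := by
        rw [Finset.filter_true_of_mem]
        · simp
        · intro z hz hzD
          simp [Finset.mem_Ico] at hz
          have := hDk z hzD
          omega
      have := L1 x 0 i i D (Nat.zero_le _) hiD (by omega) hcount
      rw [hyd, this, Nat.sub_zero]
      exact xval3 i hi
    apply List.ext_getElem?
    intro i
    by_cases hi : i < k
    · rw [List.getElem?_take_of_lt hi, hyi i hi]
    · rw [List.getElem?_eq_none_iff.mpr, List.getElem?_eq_none_iff.mpr]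
      · omega
      · simp
        omega
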